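/- arXiv:0907.3446 — 2 statements merged into one kernel-verified Lean document; each statement's English description precedes it below -/
import Mathlib

section
/- Let k and p be natural numbers with 1 ≤ k ≤ p and let ρ > 0 be real. Then the Lebesgue integral over ℝ^k satisfies ∫_{ℝ^k} (ρ² + ‖t‖²)^{-(p+1)/2} dt = π^{k/2} · (Γ((p+1−k)/2) / Γ((p+1)/2)) · ρ^{k−p−1}. Equivalently, setting p' = p − k, the integral equals ρ^{-(p'+1)} · vol(S^p)/vol(S^{p'}), where vol(S^n) = 2π^{(n+1)/2}/Γ((n+1)/2) is the n-dimensional volume of the unit n-sphere. -/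
open MeasureTheory Real Set

lemma realBeta (a b : ℝ) (ha : 0 < a) (hb : 0 < b) :
    ∫ x in (0:ℝ)..1, x ^ (a-1) * (1-x) ^ (b-1)
      = Real.Gamma a * Real.Gamma b / Real.Gamma (a+b) := by
  have h := Complex.Gamma_mul_Gamma_eq_betaIntegral (s := (a:ℂ)) (t := (b:ℂ))
    (by simpa using ha) (by simpa using hb)
  have hbeta : Complex.betaIntegral a b
      = ((∫ x in (0:ℝ)..1, x ^ (a-1) * (1-x) ^ (b-1) : ℝ) : ℂ) := by
    rw [Complex.betaIntegral, ← intervalIntegral.integral_ofReal]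
    refine intervalIntegral.integral_congr fun x hx => ?_
    rw [uIcc_of_le zero_le_one, mem_Icc] at hx
    obtain ⟨h0, h1⟩ := hx
    rw [Complex.ofReal_mul, Complex.ofReal_cpow h0, Complex.ofReal_cpow (by linarith : (0:ℝ) ≤ 1-x)]
    push_cast
    ring
  rw [hbeta, ← Complex.ofReal_add, Complex.Gamma_ofReal, Complex.Gamma_ofReal,
    Complex.Gamma_ofReal] at h
  have hG : Real.Gamma (a+b) ≠ 0 := (Real.Gamma_pos_of_pos (by linarith)).ne'
  have h' : Real.Gamma a * Real.Gamma b
      = Real.Gamma (a+b) * ∫ x in (0:ℝ)..1, x ^ (a-1) * (1-x) ^ (b-1) := by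
    exact_mod_cast h
  field_simp [h']
  rw [h']; ring

lemma div_one_sub_image : (fun x : ℝ => x / (1-x)) '' Ioo 0 1 = Ioi 0 := by
  ext u
  constructor
  · rintro ⟨x, ⟨hx0, hx1⟩, rfl⟩
    exact div_pos hx0 (by linarith)
  · intro hu
    rw [mem_Ioi] at hu
    refine ⟨u/(1+u), ⟨div_pos hu (by linarith), ?_⟩, ?_⟩
    · rw [div_lt_one (by linarith)]; linarith
    · have h1u : (1:ℝ) + u ≠ 0 := by positivity
      field_simp
      ring

lemma betaIoi (a b : ℝ) (ha : 0 < a) (hb : 0 < b) :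
    ∫ u in Ioi (0:ℝ), u ^ (a-1) * (1+u) ^ (-(a+b))
      = Real.Gamma a * Real.Gamma b / Real.Gamma (a+b) := by
  have key := integral_image_eq_integral_abs_deriv_smul (s := Ioo (0:ℝ) 1)
      (f := fun x => x/(1-x)) (f' := fun x => ((1-x)^2)⁻¹) measurableSet_Ioo
      (fun x hx => by
        have h1 : (1:ℝ) - x ≠ 0 := by rw [mem_Ioo] at hx; intro h; linarith [hx.2]
        have hd := (hasDerivAt_id x).div ((hasDerivAt_const x (1:ℝ)).sub (hasDerivAt_id x)) h1
        exact (hd.congr_deriv (by simp only [Pi.sub_apply, id]; rw [div_eq_mul_inv]; ring)).hasDerivWithinAt)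
      (fun x hx y hy hxy => by
        rw [mem_Ioo] at hx hy
        rw [div_eq_div_iff (by linarith [hx.2]) (by linarith [hy.2])] at hxy
        nlinarith)
      (fun u => u ^ (a-1) * (1+u) ^ (-(a+b)))
  rw [div_one_sub_image] at key
  rw [key]
  have congr1 : ∫ x in Ioo (0:ℝ) 1, |((1-x)^2)⁻¹| • ((x/(1-x)) ^ (a-1) * (1+x/(1-x)) ^ (-(a+b)))
      = ∫ x in Ioo (0:ℝ) 1, x ^ (a-1) * (1-x) ^ (b-1) := by
    refine setIntegral_congr_fun measurableSet_Ioo fun x hx => ?_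
    rw [mem_Ioo] at hx
    obtain ⟨hx0, hx1⟩ := hx
    have h1 : (0:ℝ) < 1 - x := by linarith
    rw [abs_of_pos (by positivity), smul_eq_mul]
    have e1 : 1 + x/(1-x) = (1-x)⁻¹ := by field_simp; ring
    rw [e1, Real.div_rpow hx0.le h1.le, Real.inv_rpow h1.le, ← Real.rpow_neg h1.le, neg_neg,
      div_eq_mul_inv, ← Real.rpow_neg h1.le, ← Real.rpow_natCast (1-x) 2, ← Real.rpow_neg h1.le]
    have hmerge : (1-x) ^ (-((2:ℕ):ℝ)) * ((1-x) ^ (-(a-1)) * (1-x) ^ (a+b)) = (1-x) ^ (b-1) := by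
      rw [← Real.rpow_add h1, ← Real.rpow_add h1]
      congr 1
      push_cast
      ring
    linear_combination (x ^ (a-1)) * hmerge
  rw [congr1, ← realBeta a b ha hb, intervalIntegral.integral_of_le zero_le_one,
    integral_Ioc_eq_integral_Ioo]

/-- For natural numbers `1 ≤ k ≤ p` and real `ρ > 0`, the Lebesgue integral over `ℝ^k`
(with the Euclidean norm) of `t ↦ (ρ² + ‖t‖²)^(-(p+1)/2)` equals
`π^(k/2) · (Γ((p+1−k)/2)/Γ((p+1)/2)) · ρ^(k−p−1)`. -/
theorem iterated_fiber_integral (k p : ℕ) (hk : 1 ≤ k) (hkp : k ≤ p) (ρ : ℝ) (hρ : 0 < ρ) :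
    ∫ t : EuclideanSpace ℝ (Fin k), (ρ ^ 2 + ‖t‖ ^ 2) ^ (-((p : ℝ) + 1) / 2) =
      π ^ ((k : ℝ) / 2) *
        (Real.Gamma (((p : ℝ) + 1 - k) / 2) / Real.Gamma (((p : ℝ) + 1) / 2)) *
        ρ ^ ((k : ℝ) - p - 1) := by
  have hk0 : (0:ℝ) < k := by exact_mod_cast hk
  have hkp' : (k:ℝ) ≤ p := by exact_mod_cast hkp
  haveI : Nonempty (Fin k) := Fin.pos_iff_nonempty.mp hk
  set e : ℝ := -((p : ℝ) + 1) / 2 with he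
  -- Step 1 : scaling of the radial integral
  have hscale := MeasureTheory.integral_comp_mul_left_Ioi
      (fun y => y ^ (k-1) * (ρ^2 + y^2) ^ e) 0 hρ
  rw [mul_zero] at hscale
  -- Step 2 : rewrite the scaled integrand
  have hcongr : ∫ x in Set.Ioi (0:ℝ), (ρ*x) ^ (k-1) * (ρ^2 + (ρ*x)^2) ^ e
      = ∫ x in Set.Ioi (0:ℝ), (ρ ^ (k-1) * ρ ^ (((2:ℕ):ℝ) * e)) * (x ^ (k-1) * (1 + x^2) ^ e) := by
    refine setIntegral_congr_fun measurableSet_Ioi fun x hx => ?_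
    have hx0 : (0:ℝ) < x := hx
    have h1 : ρ^2 + (ρ*x)^2 = ρ^2 * (1 + x^2) := by ring
    rw [h1, Real.mul_rpow (by positivity) (by positivity), mul_pow,
      ← Real.rpow_natCast ρ 2, ← Real.rpow_mul hρ.le]
    ring
  -- Step 3 : the normalized radial integral via the Beta function
  have hbval : (0:ℝ) < ((p:ℝ) + 1 - k)/2 := by linarith
  have haval : (0:ℝ) < (k:ℝ)/2 := by linarith
  have hI : ∫ x in Set.Ioi (0:ℝ), x ^ (k-1) * (1 + x^2) ^ e
      = (1/2) * (Real.Gamma ((k:ℝ)/2) * Real.Gamma (((p:ℝ)+1-k)/2)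
          / Real.Gamma (((p:ℝ)+1)/2)) := by
    have hsub := integral_comp_rpow_Ioi_of_pos (p := 2)
      (g := fun u => (1/2) * (u ^ ((k:ℝ)/2 - 1) * (1+u) ^ e)) two_pos
    have hcongr2 : ∫ x in Set.Ioi (0:ℝ),
        ((2:ℝ) * x ^ ((2:ℝ)-1)) • ((1/2) * ((x ^ (2:ℝ)) ^ ((k:ℝ)/2 - 1) * (1 + x ^ (2:ℝ)) ^ e))
        = ∫ x in Set.Ioi (0:ℝ), x ^ (k-1) * (1 + x^2) ^ e := by
      refine setIntegral_congr_fun measurableSet_Ioi fun x hx => ?_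
      have hx0 : (0:ℝ) < x := hx
      have h2 : x ^ (2:ℝ) = x ^ 2 := by
        rw [show (2:ℝ) = ((2:ℕ):ℝ) by norm_num, Real.rpow_natCast]
      have h3 : (x ^ 2 : ℝ) ^ ((k:ℝ)/2 - 1) = x ^ ((k:ℝ) - 2) := by
        rw [← Real.rpow_natCast x 2, ← Real.rpow_mul hx0.le]
        congr 1
        push_cast
        ring
      have h4 : (x:ℝ) ^ (k-1) = x ^ ((k:ℝ) - 1) := by
        rw [← Real.rpow_natCast x (k-1), Nat.cast_sub hk, Nat.cast_one]
      have h5 : x * x ^ ((k:ℝ) - 2) = x ^ ((k:ℝ) - 1) := by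
        rw [show (k:ℝ) - 1 = 1 + ((k:ℝ) - 2) by ring, Real.rpow_add hx0, Real.rpow_one]
      rw [smul_eq_mul, h2, h3, h4]
      rw [show ((2:ℝ)-1) = 1 by norm_num, Real.rpow_one]
      rw [← h5]
      ring
    rw [← hcongr2, hsub, MeasureTheory.integral_const_mul,
      show e = -((k:ℝ)/2 + ((p:ℝ)+1-(k:ℝ))/2) by rw [he]; ring,
      betaIoi _ _ haval hbval,
      show (k:ℝ)/2 + ((p:ℝ)+1-(k:ℝ))/2 = ((p:ℝ)+1)/2 by ring]
  -- Step 4 : put the pieces together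
  calc ∫ t : EuclideanSpace ℝ (Fin k), (ρ ^ 2 + ‖t‖ ^ 2) ^ e
      = (Module.finrank ℝ (EuclideanSpace ℝ (Fin k)))
          • (volume (Metric.ball (0 : EuclideanSpace ℝ (Fin k)) 1)).toReal
          • ∫ y in Set.Ioi (0:ℝ),
              y ^ (Module.finrank ℝ (EuclideanSpace ℝ (Fin k)) - 1) • ((ρ^2 + y^2) ^ e) :=
        MeasureTheory.integral_fun_norm_addHaar volume (fun y => (ρ^2 + y^2) ^ e)
    _ = π ^ ((k : ℝ) / 2) *
        (Real.Gamma (((p : ℝ) + 1 - k) / 2) / Real.Gamma (((p : ℝ) + 1) / 2)) *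
        ρ ^ ((k : ℝ) - p - 1) := by
        simp only [finrank_euclideanSpace_fin, smul_eq_mul, nsmul_eq_mul]
        have hV : (volume (Metric.ball (0 : EuclideanSpace ℝ (Fin k)) 1)).toReal
            = Real.sqrt π ^ k / Real.Gamma ((k:ℝ)/2 + 1) := by
          rw [EuclideanSpace.volume_ball, Fintype.card_fin, ENNReal.ofReal_one, one_pow, one_mul,
            ENNReal.toReal_ofReal (by positivity)]
        have hrad : ∫ y in Set.Ioi (0:ℝ), y ^ (k-1) * ((ρ^2 + y^2) ^ e)
            = ρ * ((ρ ^ (k-1) * ρ ^ (((2:ℕ):ℝ) * e)) *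
              ((1/2) * (Real.Gamma ((k:ℝ)/2) * Real.Gamma (((p:ℝ)+1-k)/2)
                / Real.Gamma (((p:ℝ)+1)/2)))) := by
          rw [eq_comm, ← hI, ← MeasureTheory.integral_const_mul, ← hcongr, hscale,
            smul_eq_mul, ← mul_assoc, mul_inv_cancel₀ hρ.ne', one_mul]
        have hrho : ρ * (ρ ^ (k-1) * ρ ^ (((2:ℕ):ℝ) * e)) = ρ ^ ((k:ℝ) - p - 1) := by
          rw [← mul_assoc, ← pow_succ', Nat.sub_add_cancel hk, ← Real.rpow_natCast ρ k,
            ← Real.rpow_add hρ, he]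
          congr 1
          push_cast
          ring
        have hrad2 : ∫ y in Set.Ioi (0:ℝ), y ^ (k-1) * ((ρ^2 + y^2) ^ e)
            = ρ ^ ((k:ℝ) - p - 1) *
              ((1/2) * (Real.Gamma ((k:ℝ)/2) * Real.Gamma (((p:ℝ)+1-k)/2)
                / Real.Gamma (((p:ℝ)+1)/2))) := by
          rw [hrad, ← hrho]; ring
        rw [hrad2, hV]
        -- now pure arithmetic
        have hsq : Real.sqrt π ^ k = π ^ ((k:ℝ)/2) := by
          rw [Real.sqrt_eq_rpow, ← Real.rpow_natCast (π ^ ((1:ℝ)/2)) k,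
            ← Real.rpow_mul pi_nonneg]
          ring_nf
        have hGk : Real.Gamma ((k:ℝ)/2 + 1) = ((k:ℝ)/2) * Real.Gamma ((k:ℝ)/2) :=
          Real.Gamma_add_one haval.ne'
        have hG1 : Real.Gamma ((k:ℝ)/2) ≠ 0 := (Real.Gamma_pos_of_pos haval).ne'
        have hG3 : Real.Gamma (((p:ℝ)+1)/2) ≠ 0 :=
          (Real.Gamma_pos_of_pos (by linarith)).ne'
        rw [hsq, hGk]
        field_simp
end

section
/- Let m, n ≥ 1 be natural numbers and set p = m + n. Let K ⊂ ℝ^m and K' ⊂ ℝ^n be compact boxes (products of closed intervals), and let x : ℝ^m → ℝ^{p+1} and y : ℝ^n → ℝ^{p+1} be continuously differentiable maps. For R > 0 let A_R = {(s, t) ∈ K × K' : ‖y(t) − x(s)‖ ≥ R}. Then |∫_{A_R} det(y(t) − x(s), ∂x/∂s₁, …, ∂x/∂s_m, ∂y/∂t₁, …, ∂y/∂t_n) · ‖y(t) − x(s)‖^{-(p+1)} ds dt| ≤ (1/R^p) · ∫_{K × K'} (∏_{i=1}^m ‖∂x/∂s_i(s)‖) · (∏_{j=1}^n ‖∂y/∂t_j(t)‖)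 ds dt; in particular, the restricted integral tends to 0 as R → ∞. -/
open MeasureTheory Real Filter

section Aux

open Module

lemma hadamard_aux {N : ℕ} (v : Fin N → EuclideanSpace ℝ (Fin N)) :
    |Matrix.det (Matrix.of fun i j => v j i)| ≤ ∏ j, ‖v j‖ := by
  classical
  haveI : WellFoundedLT (Fin N) := inferInstance
  have hcard : finrank ℝ (EuclideanSpace ℝ (Fin N)) = Fintype.card (Fin N) := by simp
  set B := InnerProductSpace.gramSchmidtOrthonormalBasis (𝕜 := ℝ) hcard v with hB
  set std := EuclideanSpace.basisFun (Fin N) ℝ with hstd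
  have h1 : (Matrix.of fun i j => v j i) = std.toBasis.toMatrix v := by
    ext i j
    simp [Basis.toMatrix_apply, hstd, EuclideanSpace.basisFun_repr]
  have h2 : std.toBasis.toMatrix v = std.toBasis.toMatrix B.toBasis * B.toBasis.toMatrix v :=
    (Basis.toMatrix_mul_toMatrix _ _ _).symm
  have h3 : |Matrix.det (std.toBasis.toMatrix B.toBasis)| = 1 := by
    have := std.det_to_matrix_orthonormalBasis (b := B)
    rwa [Basis.det_apply, Real.norm_eq_abs] at this
  have h4 : B.toBasis.det v = ∏ i, (inner ℝ (B i) (v i) : ℝ) :=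
    InnerProductSpace.gramSchmidtOrthonormalBasis_det hcard v
  calc |Matrix.det (Matrix.of fun i j => v j i)|
      = |Matrix.det (std.toBasis.toMatrix B.toBasis)| * |Matrix.det (B.toBasis.toMatrix v)| := by
        rw [h1, h2, Matrix.det_mul, abs_mul]
    _ = |B.toBasis.det v| := by rw [h3, one_mul, Basis.det_apply]
    _ = |∏ i, (inner ℝ (B i) (v i) : ℝ)| := by rw [h4]
    _ ≤ ∏ i, |(inner ℝ (B i) (v i) : ℝ)| := (Finset.abs_prod _ _).le
    _ ≤ ∏ i, ‖v i‖ := by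
        refine Finset.prod_le_prod (fun i _ => abs_nonneg _) fun i _ => ?_
        calc |(inner ℝ (B i) (v i) : ℝ)| ≤ ‖B i‖ * ‖v i‖ := abs_real_inner_le_norm _ _
          _ = ‖v i‖ := by rw [B.orthonormal.1 i, one_mul]

lemma euclidean_box_compact {k : ℕ} (a b : Fin k → ℝ) :
    IsCompact {s : EuclideanSpace ℝ (Fin k) | ∀ i, s i ∈ Set.Icc (a i) (b i)} := by
  have h : IsCompact (Set.univ.pi fun i => Set.Icc (a i) (b i)) :=
    isCompact_univ_pi fun i => isCompact_Icc
  have heq : {s : EuclideanSpace ℝ (Fin k) | ∀ i, s i ∈ Set.Icc (a i) (b i)}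
      = (EuclideanSpace.equiv (Fin k) ℝ).toHomeomorph ⁻¹'
        (Set.univ.pi fun i => Set.Icc (a i) (b i)) := by
    ext s
    simp only [Set.mem_setOf_eq, Set.mem_preimage, Set.mem_pi, Set.mem_univ, forall_true_left,
      true_implies]
    rfl
  rw [heq]
  exact (EuclideanSpace.equiv (Fin k) ℝ).toHomeomorph.isCompact_preimage.mpr h

end Aux

/-- For `C¹` parametrizations `x : ℝ^m → ℝ^(m+n+1)` and `y : ℝ^n → ℝ^(m+n+1)` over compact
boxes, the general Gauss linking integrand restricted to the region `A_R` where
`‖y(t) − x(s)‖ ≥ R` integrates to something of absolute value at most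
`(1/R^(m+n)) · ∫ (∏ᵢ‖∂x/∂sᵢ‖)(∏ⱼ‖∂y/∂tⱼ‖)`; in particular the restricted integral tends
to `0` as `R → ∞`. -/
theorem general_linking_integral_far_region_vanishes (m n : ℕ) (hm : 1 ≤ m) (hn : 1 ≤ n)
    (a b : Fin m → ℝ) (a' b' : Fin n → ℝ)
    (x : EuclideanSpace ℝ (Fin m) → EuclideanSpace ℝ (Fin (m + n + 1)))
    (y : EuclideanSpace ℝ (Fin n) → EuclideanSpace ℝ (Fin (m + n + 1)))
    (hx : ContDiff ℝ 1 x) (hy : ContDiff ℝ 1 y) :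
    (∀ R : ℝ, 0 < R →
      |∫ st in {st : EuclideanSpace ℝ (Fin m) × EuclideanSpace ℝ (Fin n) |
            (∀ i, st.1 i ∈ Set.Icc (a i) (b i)) ∧ (∀ j, st.2 j ∈ Set.Icc (a' j) (b' j)) ∧
            R ≤ ‖y st.2 - x st.1‖},
          Matrix.det (Matrix.of fun i j =>
            (Fin.cons (y st.2 - x st.1)
              (Fin.append
                (fun i' : Fin m => fderiv ℝ x st.1 (EuclideanSpace.single i' 1))
                (fun j' : Fin n => fderiv ℝ y st.2 (EuclideanSpace.single j' 1))) :
              Fin (m + n + 1) → EuclideanSpace ℝ (Fin (m + n + 1))) j i) /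
            ‖y st.2 - x st.1‖ ^ (m + n + 1)| ≤
        (1 / R ^ (m + n)) *
          ∫ st in {st : EuclideanSpace ℝ (Fin m) × EuclideanSpace ℝ (Fin n) |
              (∀ i, st.1 i ∈ Set.Icc (a i) (b i)) ∧ (∀ j, st.2 j ∈ Set.Icc (a' j) (b' j))},
            (∏ i, ‖fderiv ℝ x st.1 (EuclideanSpace.single i 1)‖) *
              (∏ j, ‖fderiv ℝ y st.2 (EuclideanSpace.single j 1)‖)) ∧
    Tendsto (fun R : ℝ =>
        ∫ st in {st : EuclideanSpace ℝ (Fin m) × EuclideanSpace ℝ (Fin n) |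
            (∀ i, st.1 i ∈ Set.Icc (a i) (b i)) ∧ (∀ j, st.2 j ∈ Set.Icc (a' j) (b' j)) ∧
            R ≤ ‖y st.2 - x st.1‖},
          Matrix.det (Matrix.of fun i j =>
            (Fin.cons (y st.2 - x st.1)
              (Fin.append
                (fun i' : Fin m => fderiv ℝ x st.1 (EuclideanSpace.single i' 1))
                (fun j' : Fin n => fderiv ℝ y st.2 (EuclideanSpace.single j' 1))) :
              Fin (m + n + 1) → EuclideanSpace ℝ (Fin (m + n + 1))) j i) /
            ‖y st.2 - x st.1‖ ^ (m + n + 1))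
      atTop (nhds 0) := by
  classical
  set f : EuclideanSpace ℝ (Fin m) × EuclideanSpace ℝ (Fin n) → ℝ := fun st =>
    Matrix.det (Matrix.of fun i j =>
      (Fin.cons (y st.2 - x st.1)
        (Fin.append
          (fun i' : Fin m => fderiv ℝ x st.1 (EuclideanSpace.single i' 1))
          (fun j' : Fin n => fderiv ℝ y st.2 (EuclideanSpace.single j' 1))) :
        Fin (m + n + 1) → EuclideanSpace ℝ (Fin (m + n + 1))) j i) /
      ‖y st.2 - x st.1‖ ^ (m + n + 1) with hfdef
  set g : EuclideanSpace ℝ (Fin m) × EuclideanSpace ℝ (Fin n) → ℝ := fun st =>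
    (∏ i, ‖fderiv ℝ x st.1 (EuclideanSpace.single i 1)‖) *
      (∏ j, ‖fderiv ℝ y st.2 (EuclideanSpace.single j 1)‖) with hgdef
  set K : Set (EuclideanSpace ℝ (Fin m) × EuclideanSpace ℝ (Fin n)) :=
    {st | (∀ i, st.1 i ∈ Set.Icc (a i) (b i)) ∧ (∀ j, st.2 j ∈ Set.Icc (a' j) (b' j))} with hKdef
  set A : ℝ → Set (EuclideanSpace ℝ (Fin m) × EuclideanSpace ℝ (Fin n)) := fun R =>
    {st | (∀ i, st.1 i ∈ Set.Icc (a i) (b i)) ∧ (∀ j, st.2 j ∈ Set.Icc (a' j) (b' j)) ∧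
      R ≤ ‖y st.2 - x st.1‖} with hAdef
  have hdx : Continuous (fderiv ℝ x) := hx.continuous_fderiv one_ne_zero
  have hdy : Continuous (fderiv ℝ y) := hy.continuous_fderiv one_ne_zero
  have hgcont : Continuous g := by
    apply Continuous.mul
    · exact continuous_finset_prod _ fun i _ =>
        ((hdx.comp continuous_fst).clm_apply continuous_const).norm
    · exact continuous_finset_prod _ fun j _ =>
        ((hdy.comp continuous_snd).clm_apply continuous_const).norm
  have hg0 : ∀ st, 0 ≤ g st := fun st =>
    mul_nonneg (Finset.prod_nonneg fun _ _ => norm_nonneg _)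
      (Finset.prod_nonneg fun _ _ => norm_nonneg _)
  have hKc : IsCompact K := by
    have : K = {s : EuclideanSpace ℝ (Fin m) | ∀ i, s i ∈ Set.Icc (a i) (b i)} ×ˢ
        {t : EuclideanSpace ℝ (Fin n) | ∀ j, t j ∈ Set.Icc (a' j) (b' j)} := rfl
    rw [this]
    exact (euclidean_box_compact a b).prod (euclidean_box_compact a' b')
  have hgint : IntegrableOn g K := hgcont.continuousOn.integrableOn_compact hKc
  have hAcl : ∀ R : ℝ, IsClosed (A R) := by
    intro R
    have h1 : IsClosed {st : EuclideanSpace ℝ (Fin m) × EuclideanSpace ℝ (Fin n) |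
        ∀ i, st.1 i ∈ Set.Icc (a i) (b i)} := by
      have : {st : EuclideanSpace ℝ (Fin m) × EuclideanSpace ℝ (Fin n) |
          ∀ i, st.1 i ∈ Set.Icc (a i) (b i)} =
          ⋂ i, (fun st : EuclideanSpace ℝ (Fin m) × EuclideanSpace ℝ (Fin n) => st.1 i) ⁻¹'
            Set.Icc (a i) (b i) := by
        ext st; simp [Set.mem_iInter]
      rw [this]
      exact isClosed_iInter fun i =>
        isClosed_Icc.preimage ((EuclideanSpace.proj i).continuous.comp continuous_fst)
    have h2 : IsClosed {st : EuclideanSpace ℝ (Fin m) × EuclideanSpace ℝ (Fin n) |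
        ∀ j, st.2 j ∈ Set.Icc (a' j) (b' j)} := by
      have : {st : EuclideanSpace ℝ (Fin m) × EuclideanSpace ℝ (Fin n) |
          ∀ j, st.2 j ∈ Set.Icc (a' j) (b' j)} =
          ⋂ j, (fun st : EuclideanSpace ℝ (Fin m) × EuclideanSpace ℝ (Fin n) => st.2 j) ⁻¹'
            Set.Icc (a' j) (b' j) := by
        ext st; simp [Set.mem_iInter]
      rw [this]
      exact isClosed_iInter fun j =>
        isClosed_Icc.preimage ((EuclideanSpace.proj j).continuous.comp continuous_snd)
    have h3 : IsClosed {st : EuclideanSpace ℝ (Fin m) × EuclideanSpace ℝ (Fin n) |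
        R ≤ ‖y st.2 - x st.1‖} :=
      isClosed_le continuous_const
        (((hy.continuous.comp continuous_snd).sub (hx.continuous.comp continuous_fst)).norm)
    have : A R = {st : EuclideanSpace ℝ (Fin m) × EuclideanSpace ℝ (Fin n) |
        ∀ i, st.1 i ∈ Set.Icc (a i) (b i)} ∩
        ({st : EuclideanSpace ℝ (Fin m) × EuclideanSpace ℝ (Fin n) |
          ∀ j, st.2 j ∈ Set.Icc (a' j) (b' j)} ∩
          {st : EuclideanSpace ℝ (Fin m) × EuclideanSpace ℝ (Fin n) |
            R ≤ ‖y st.2 - x st.1‖}) := rfl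
    rw [this]
    exact h1.inter (h2.inter h3)
  have hAsub : ∀ R : ℝ, A R ⊆ K := fun R st hst => ⟨hst.1, hst.2.1⟩
  have hAc : ∀ R : ℝ, IsCompact (A R) := fun R =>
    hKc.of_isClosed_subset (hAcl R) (hAsub R)
  -- pointwise bound
  have hpt : ∀ R : ℝ, 0 < R → ∀ st ∈ A R, |f st| ≤ (1 / R ^ (m + n)) * g st := by
    intro R hR st hst
    obtain ⟨-, -, hd⟩ := hst
    set d := ‖y st.2 - x st.1‖ with hddef
    have hd0 : 0 < d := lt_of_lt_of_le hR hd
    set v : Fin (m + n + 1) → EuclideanSpace ℝ (Fin (m + n + 1)) :=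
      Fin.cons (y st.2 - x st.1)
        (Fin.append
          (fun i' : Fin m => fderiv ℝ x st.1 (EuclideanSpace.single i' 1))
          (fun j' : Fin n => fderiv ℝ y st.2 (EuclideanSpace.single j' 1))) with hvdef
    have hprod : ∏ j, ‖v j‖ = d * g st := by
      have h0 : ‖v 0‖ = d := by rw [hvdef, Fin.cons_zero]
      have h1 : (∏ j : Fin (m + n), ‖v j.succ‖) = g st := by
        have hc : ∀ j : Fin (m + n), ‖v j.succ‖ =
            ‖Fin.append (fun i' : Fin m => fderiv ℝ x st.1 (EuclideanSpace.single i' 1))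
              (fun j' : Fin n => fderiv ℝ y st.2 (EuclideanSpace.single j' 1)) j‖ := fun j => by
          rw [hvdef, Fin.cons_succ]
        rw [Finset.prod_congr rfl fun j _ => hc j, Fin.prod_univ_add]
        simp only [Fin.append_left, Fin.append_right]
        rfl
      rw [Fin.prod_univ_succ, h0, h1]
    have hhad : |Matrix.det (Matrix.of fun i j => v j i)| ≤ d * g st := by
      rw [← hprod]; exact hadamard_aux v
    have hden : |d ^ (m + n + 1)| = d ^ (m + n + 1) := abs_of_nonneg (by positivity)
    have hfst : |f st| = |Matrix.det (Matrix.of fun i j => v j i)| / d ^ (m + n + 1) := by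
      simp only [hfdef, hvdef, hddef]
      rw [abs_div]
      rw [hddef] at hden
      rw [hden]
    rw [hfst]
    calc |Matrix.det (Matrix.of fun i j => v j i)| / d ^ (m + n + 1)
        ≤ (d * g st) / d ^ (m + n + 1) := by
          apply div_le_div_of_nonneg_right hhad (by positivity)
      _ = g st / d ^ (m + n) := by
          rw [pow_succ' d (m + n), mul_div_mul_left _ _ (ne_of_gt hd0)]
      _ ≤ g st / R ^ (m + n) := by
          exact div_le_div_of_nonneg_left (hg0 st) (by positivity)
            (pow_le_pow_left₀ hR.le hd _)
      _ = (1 / R ^ (m + n)) * g st := by rw [one_div, div_eq_mul_inv, mul_comm]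
  set C : ℝ := ∫ st in K, g st with hCdef
  have key : ∀ R : ℝ, 0 < R → |∫ st in A R, f st| ≤ (1 / R ^ (m + n)) * C := by
    intro R hR
    have hintA : IntegrableOn (fun st => (1 / R ^ (m + n)) * g st) (A R) :=
      (continuous_const.mul hgcont).continuousOn.integrableOn_compact (hAc R)
    have hintK : IntegrableOn (fun st => (1 / R ^ (m + n)) * g st) K :=
      (continuous_const.mul hgcont).continuousOn.integrableOn_compact hKc
    calc |∫ st in A R, f st| ≤ ∫ st in A R, |f st| := by
          simpa [Real.norm_eq_abs] using
            norm_integral_le_integral_norm (μ := volume.restrict (A R)) f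
      _ ≤ ∫ st in A R, (1 / R ^ (m + n)) * g st := by
          refine integral_mono_of_nonneg (Filter.Eventually.of_forall fun st => abs_nonneg _)
            hintA ?_
          exact ae_restrict_of_forall_mem (hAcl R).measurableSet (hpt R hR)
      _ ≤ ∫ st in K, (1 / R ^ (m + n)) * g st := by
          refine setIntegral_mono_set hintK
            (Filter.Eventually.of_forall fun st =>
              mul_nonneg (by positivity) (hg0 st))
            (Filter.Eventually.of_forall (hAsub R))
      _ = (1 / R ^ (m + n)) * C := integral_const_mul _ _
  refine ⟨key, ?_⟩
  have hC0 : 0 ≤ C := setIntegral_nonneg hKc.isClosed.measurableSet fun st _ => hg0 st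
  have hlim : Tendsto (fun R : ℝ => (1 / R ^ (m + n)) * C) atTop (nhds 0) := by
    have hp : Tendsto (fun R : ℝ => R ^ (m + n)) atTop atTop :=
      tendsto_pow_atTop (by omega)
    have h2 := hp.inv_tendsto_atTop.mul_const C
    rw [zero_mul] at h2
    refine h2.congr fun R => ?_
    simp only [Pi.inv_apply, one_div]
  refine squeeze_zero_norm' ?_ hlim
  filter_upwards [eventually_gt_atTop (0 : ℝ)] with R hR
  rw [Real.norm_eq_abs]; exact key R hR
end
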